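/- Let V be a real normed space and r ≥ 2 a real number. For every ε > 0 there exists a constant C_ε > 0 depending only on r and ε such that for all a ≥ 0, all t ≥ 0 and all τ, η ∈ V: φ_{a+‖τ‖}(t) ≤ ε φ_{a+‖η‖}(‖τ − η‖) + C_ε φ_{a+‖η‖}(t), where φ_b(u) = ∫_0^u (b+σ)^{r−2} σ dσ for b ≥ 0. -/

import Mathlib

open MeasureTheory

/-- The shifted function `φ_a(t) = ∫_0^t (a+s)^{r−2} s ds`. -/
noncomputable def phi (r a t : ℝ) : ℝ := ∫ s in (0 : ℝ)..t, (a + s) ^ (r - 2) * s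

lemma phi_cont (r b : ℝ) (hr : 2 ≤ r) :
    Continuous fun s : ℝ => (b + s) ^ (r - 2) * s := by
  have h1 : Continuous fun s : ℝ => (b + s) ^ (r - 2) := by
    rw [continuous_iff_continuousAt]
    intro x
    exact (Real.continuousAt_rpow_const (b + x) (r - 2) (Or.inr (by linarith))).comp
      (by fun_prop)
  exact h1.mul continuous_id

lemma phi_integrable (r b t : ℝ) (hr : 2 ≤ r) :
    IntervalIntegrable (fun s : ℝ => (b + s) ^ (r - 2) * s) volume 0 t :=
  (phi_cont r b hr).intervalIntegrable 0 t

lemma phi_mono_shift (r : ℝ) (hr : 2 ≤ r) {b b' t : ℝ} (hb : 0 ≤ b) (hbb : b ≤ b')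
    (ht : 0 ≤ t) : phi r b t ≤ phi r b' t := by
  unfold phi
  apply intervalIntegral.integral_mono_on ht (phi_integrable r b t hr)
    (phi_integrable r b' t hr)
  intro s hs
  have hs0 : 0 ≤ s := hs.1
  exact mul_le_mul_of_nonneg_right
    (Real.rpow_le_rpow (by linarith) (by linarith) (by linarith)) hs0

lemma phi_lower (r : ℝ) (hr : 2 ≤ r) {b t : ℝ} (hb : 0 ≤ b) (ht : 0 ≤ t) :
    t ^ r / r ≤ phi r b t := by
  have key : ∫ s in (0:ℝ)..t, s ^ (r - 1) ≤ phi r b t := by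
    unfold phi
    apply intervalIntegral.integral_mono_on ht
      (by
        apply ContinuousOn.intervalIntegrable
        apply ContinuousOn.rpow_const continuousOn_id
        intro x hx
        exact Or.inr (by linarith))
      (phi_integrable r b t hr)
    intro s hs
    have hs0 : 0 ≤ s := hs.1
    have heq : s ^ (r - 1) = s ^ (r - 2) * s := by
      rw [← Real.rpow_add_one' hs0 (by linarith)]
      ring_nf
    rw [heq]
    exact mul_le_mul_of_nonneg_right
      (Real.rpow_le_rpow hs0 (by linarith) (by linarith)) hs0
  have hcalc : ∫ s in (0:ℝ)..t, s ^ (r - 1) = t ^ r / r := by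
    rw [integral_rpow (Or.inl (by linarith))]
    rw [Real.zero_rpow (by linarith), sub_add_cancel]
    norm_num
  linarith [key, hcalc.symm.le]

lemma phi_nonneg (r : ℝ) (hr : 2 ≤ r) {b t : ℝ} (hb : 0 ≤ b) (ht : 0 ≤ t) :
    0 ≤ phi r b t := by
  have h1 : (0:ℝ) ≤ t ^ r / r := by positivity
  linarith [phi_lower r hr hb ht]

lemma phi_split (r : ℝ) (hr : 2 ≤ r) {b d t : ℝ} (hb : 0 ≤ b) (hd : 0 ≤ d)
    (ht : 0 ≤ t) :
    phi r (b + d) t ≤ 2 ^ (r - 2) * phi r b t + 2 ^ (r - 2) * d ^ (r - 2) * (t ^ 2 / 2) := by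
  have hc2 : Continuous fun s : ℝ => 2 ^ (r - 2) * d ^ (r - 2) * s := by fun_prop
  have key : phi r (b + d) t ≤
      ∫ s in (0:ℝ)..t, 2 ^ (r - 2) * ((b + s) ^ (r - 2) * s) +
        2 ^ (r - 2) * d ^ (r - 2) * s := by
    unfold phi
    apply intervalIntegral.integral_mono_on ht (phi_integrable r (b + d) t hr)
    · exact ((continuous_const.mul (phi_cont r b hr)).add hc2).intervalIntegrable 0 t
    intro s hs
    have hs0 : 0 ≤ s := hs.1
    have h1 : b + d + s ≤ 2 * max (b + s) d := by
      rcases le_total (b + s) d with h | h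
      · nlinarith [le_max_right (b + s) d]
      · nlinarith [le_max_left (b + s) d]
    have h2 : (b + d + s) ^ (r - 2) ≤ (2 * max (b + s) d) ^ (r - 2) :=
      Real.rpow_le_rpow (by positivity) h1 (by linarith)
    have hmax : 0 ≤ max (b + s) d := le_trans hd (le_max_right _ _)
    have h3 : (2 * max (b + s) d) ^ (r - 2)
        = 2 ^ (r - 2) * (max (b + s) d) ^ (r - 2) :=
      Real.mul_rpow (by norm_num) hmax
    have h4 : (max (b + s) d) ^ (r - 2) ≤ (b + s) ^ (r - 2) + d ^ (r - 2) := by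
      rcases max_cases (b + s) d with ⟨heq, _⟩ | ⟨heq, _⟩ <;> rw [heq]
      · nlinarith [Real.rpow_nonneg hd (r - 2)]
      · nlinarith [Real.rpow_nonneg (by linarith : (0:ℝ) ≤ b + s) (r - 2)]
    have h5 : (b + d + s) ^ (r - 2) ≤ 2 ^ (r - 2) * ((b + s) ^ (r - 2) + d ^ (r - 2)) := by
      have h20 : (0:ℝ) ≤ 2 ^ (r - 2) := by positivity
      calc (b + d + s) ^ (r - 2) ≤ 2 ^ (r - 2) * (max (b + s) d) ^ (r - 2) := by
              rw [← h3]; exact h2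
        _ ≤ _ := mul_le_mul_of_nonneg_left h4 h20
    calc (b + d + s) ^ (r - 2) * s
        ≤ 2 ^ (r - 2) * ((b + s) ^ (r - 2) + d ^ (r - 2)) * s :=
          mul_le_mul_of_nonneg_right h5 hs0
      _ = 2 ^ (r - 2) * ((b + s) ^ (r - 2) * s) + 2 ^ (r - 2) * d ^ (r - 2) * s := by ring
  have hsplit : (∫ s in (0:ℝ)..t, 2 ^ (r - 2) * ((b + s) ^ (r - 2) * s) +
        2 ^ (r - 2) * d ^ (r - 2) * s)
      = 2 ^ (r - 2) * phi r b t + 2 ^ (r - 2) * d ^ (r - 2) * (t ^ 2 / 2) := by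
    rw [intervalIntegral.integral_add
      ((show Continuous (fun s : ℝ => (2:ℝ) ^ (r - 2) * ((b + s) ^ (r - 2) * s)) from
        continuous_const.mul (phi_cont r b hr)).intervalIntegrable 0 t)
      (hc2.intervalIntegrable 0 t),
      intervalIntegral.integral_const_mul, intervalIntegral.integral_const_mul,
      integral_id]
    unfold phi
    ring
  linarith [key, hsplit.le]

set_option maxHeartbeats 1000000 in
/-- Young-type shift-change inequality (4.1b): for `r ≥ 2` and every `ε > 0`
there is `C_ε > 0` depending only on `r` and `ε` such that for all `a ≥ 0`,
`t ≥ 0` and all `τ, η` in a real normed space,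
`φ_{a+‖τ‖}(t) ≤ ε φ_{a+‖η‖}(‖τ − η‖) + C_ε φ_{a+‖η‖}(t)`. -/
theorem young_type_shift_change
    {V : Type*} [NormedAddCommGroup V]
    (r : ℝ) (hr : 2 ≤ r) :
    ∀ ε : ℝ, 0 < ε → ∃ C : ℝ, 0 < C ∧
      ∀ (a t : ℝ), 0 ≤ a → 0 ≤ t → ∀ τ η : V,
        phi r (a + ‖τ‖) t ≤ ε * phi r (a + ‖η‖) ‖τ - η‖ + C * phi r (a + ‖η‖) t := by
  intro ε hε
  have hr0 : (0:ℝ) < r := by linarith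
  set lam : ℝ := ε / (r * 2 ^ (r - 3)) with hlam_def
  have hlam : 0 < lam := by positivity
  set mu : ℝ := lam ^ (-(r - 2) / 2) with hmu_def
  have hmu : 0 < mu := Real.rpow_pos_of_pos hlam _
  have h230 : (0:ℝ) < 2 ^ (r - 3) := by positivity
  have hC : (0:ℝ) < 2 ^ (r - 2) + 2 ^ (r - 3) * mu * r := by
    have h220 : (0:ℝ) < 2 ^ (r - 2) := Real.rpow_pos_of_pos (by norm_num) _
    nlinarith [mul_pos (mul_pos h230 hmu) hr0]
  refine ⟨2 ^ (r - 2) + 2 ^ (r - 3) * mu * r, hC, ?_⟩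
  intro a t ha ht τ η
  set b : ℝ := a + ‖η‖ with hb_def
  set d : ℝ := ‖τ - η‖ with hd_def
  have hb : 0 ≤ b := add_nonneg ha (norm_nonneg _)
  have hd : 0 ≤ d := norm_nonneg _
  have step1 : phi r (a + ‖τ‖) t ≤ phi r (b + d) t := by
    apply phi_mono_shift r hr (add_nonneg ha (norm_nonneg _)) ?_ ht
    have h := norm_sub_norm_le τ η
    simp only [hb_def, hd_def]
    linarith
  have step2 := phi_split r hr hb hd ht
  have hα : (0:ℝ) ≤ (r - 2) / r := div_nonneg (by linarith) hr0.le
  have hβ : (0:ℝ) ≤ 2 / r := by positivity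
  have hsum : (r - 2) / r + 2 / r = 1 := by field_simp; ring
  have hdr0 : (0:ℝ) ≤ d ^ r := Real.rpow_nonneg hd r
  have htr0 : (0:ℝ) ≤ t ^ r := Real.rpow_nonneg ht r
  have amgm := Real.geom_mean_le_arith_mean2_weighted hα hβ
    (mul_nonneg hlam.le hdr0) (mul_nonneg hmu.le htr0) hsum
  have hgm : (lam * d ^ r) ^ ((r - 2) / r) * (mu * t ^ r) ^ (2 / r)
      = d ^ (r - 2) * t ^ 2 := by
    rw [Real.mul_rpow hlam.le hdr0, Real.mul_rpow hmu.le htr0]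
    have hdr : (d ^ r) ^ ((r - 2) / r) = d ^ (r - 2) := by
      rw [← Real.rpow_mul hd]
      congr 1
      field_simp
    have htr : (t ^ r) ^ (2 / r) = t ^ 2 := by
      rw [← Real.rpow_mul ht]
      have : r * (2 / r) = 2 := by field_simp
      rw [this, Real.rpow_two]
    have hlm : lam ^ ((r - 2) / r) * mu ^ (2 / r) = 1 := by
      rw [hmu_def, ← Real.rpow_mul hlam.le,
        ← Real.rpow_add hlam]
      have : (r - 2) / r + -(r - 2) / 2 * (2 / r) = 0 := by field_simp; ring
      rw [this, Real.rpow_zero]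
    calc lam ^ ((r - 2) / r) * (d ^ r) ^ ((r - 2) / r)
          * (mu ^ (2 / r) * (t ^ r) ^ (2 / r))
        = (lam ^ ((r - 2) / r) * mu ^ (2 / r))
          * ((d ^ r) ^ ((r - 2) / r) * (t ^ r) ^ (2 / r)) := by ring
      _ = d ^ (r - 2) * t ^ 2 := by rw [hlm, hdr, htr, one_mul]
  have hAM : d ^ (r - 2) * t ^ 2 ≤ (r - 2) / r * (lam * d ^ r) + 2 / r * (mu * t ^ r) := by
    rw [← hgm]; exact amgm
  have h23 : (2:ℝ) ^ (r - 2) = 2 * 2 ^ (r - 3) := by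
    rw [show r - 2 = 1 + (r - 3) by ring, Real.rpow_add (by norm_num), Real.rpow_one]
  have hαle : (r - 2) / r ≤ 1 := by
    rw [div_le_one hr0]; linarith
  have hβle : 2 / r ≤ 1 := by
    rw [div_le_one hr0]; linarith
  have q1 : (r - 2) / r * (lam * d ^ r) ≤ lam * d ^ r := by
    nlinarith [mul_nonneg hlam.le hdr0]
  have q2 : 2 / r * (mu * t ^ r) ≤ mu * t ^ r := by
    nlinarith [mul_nonneg hmu.le htr0]
  have hc : 2 ^ (r - 3) * lam = ε / r := by
    rw [hlam_def]; field_simp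
  have hL1 : t ^ r / r ≤ phi r b t := phi_lower r hr hb ht
  have hL2 : d ^ r / r ≤ phi r b d := phi_lower r hr hb hd
  have e : 2 ^ (r - 3) * (lam * d ^ r) + 2 ^ (r - 3) * (mu * t ^ r)
      = ε * (d ^ r / r) + (2 ^ (r - 3) * mu * r) * (t ^ r / r) := by
    have h1 : (2:ℝ) ^ (r - 3) * (lam * d ^ r) = ε * (d ^ r / r) := by
      rw [← mul_assoc, hc]; ring
    have h2 : (2:ℝ) ^ (r - 3) * (mu * t ^ r) = (2 ^ (r - 3) * mu * r) * (t ^ r / r) := by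
      field_simp
    rw [h1, h2]
  calc phi r (a + ‖τ‖) t ≤ phi r (b + d) t := step1
    _ ≤ 2 ^ (r - 2) * phi r b t + 2 ^ (r - 2) * d ^ (r - 2) * (t ^ 2 / 2) := step2
    _ = 2 ^ (r - 2) * phi r b t + 2 ^ (r - 3) * (d ^ (r - 2) * t ^ 2) := by
        rw [h23]; ring
    _ ≤ 2 ^ (r - 2) * phi r b t
        + 2 ^ (r - 3) * ((r - 2) / r * (lam * d ^ r) + 2 / r * (mu * t ^ r)) := by
        nlinarith [mul_le_mul_of_nonneg_left hAM h230.le]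
    _ ≤ 2 ^ (r - 2) * phi r b t
        + (2 ^ (r - 3) * (lam * d ^ r) + 2 ^ (r - 3) * (mu * t ^ r)) := by
        nlinarith [mul_le_mul_of_nonneg_left (add_le_add q1 q2) h230.le]
    _ = 2 ^ (r - 2) * phi r b t + ε * (d ^ r / r) + (2 ^ (r - 3) * mu * r) * (t ^ r / r) := by
        rw [e]; ring
    _ ≤ ε * phi r b d + (2 ^ (r - 2) + 2 ^ (r - 3) * mu * r) * phi r b t := by
        have p1 := mul_le_mul_of_nonneg_left hL2 hε.le
        have p2 := mul_le_mul_of_nonneg_left hL1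
          (by positivity : (0:ℝ) ≤ 2 ^ (r - 3) * mu * r)
        nlinarith
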